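/- Let d ≥ 1, let Γ ⊆ ℕ^{1+d} be an admissible graded subsemigroup, and let K be a compact convex subset of ℝ^d contained in the interior of Δ(Γ). Then there exists M such that for all integers m ≥ M, K ∩ {α/m : α ∈ Γ_m} = K ∩ {β/m : β ∈ ℤ^d}. -/

import Mathlib

open scoped BigOperators
open Filter MeasureTheory

/-- Points of `ℕ^{1+d}`, written as a degree together with a vector in `ℕ^d`. -/
abbrev NPt (d : ℕ) := ℕ × (Fin d → ℕ)

/-- A subset of `ℕ^{1+d}` is a (graded) subsemigroup if it is closed under addition. -/
def IsGradedSubsemigroup {d : ℕ} (Γ : Set (NPt d)) : Prop :=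
  ∀ x ∈ Γ, ∀ y ∈ Γ, x + y ∈ Γ

/-- Linear growth: there is `C > 0` with `|α|₁ ≤ C·m` for all `(m, α) ∈ Γ`. -/
def HasLinearGrowth {d : ℕ} (Γ : Set (NPt d)) : Prop :=
  ∃ C : ℝ, 0 < C ∧ ∀ p ∈ Γ, (∑ i, (p.2 i : ℝ)) ≤ C * p.1

/-- The canonical embedding `ℕ^{1+d} → ℤ^{1+d}`. -/
def nptToInt {d : ℕ} (p : NPt d) : ℤ × (Fin d → ℤ) :=
  ((p.1 : ℤ), fun i => (p.2 i : ℤ))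

/-- `Γ` generates `ℤ^{1+d}` as a group. -/
def GeneratesFullLattice {d : ℕ} (Γ : Set (NPt d)) : Prop :=
  AddSubgroup.closure (nptToInt '' Γ) = ⊤

/-- An admissible graded subsemigroup of `ℕ^{1+d}`. -/
def IsAdmissible {d : ℕ} (Γ : Set (NPt d)) : Prop :=
  IsGradedSubsemigroup Γ ∧ HasLinearGrowth Γ ∧ GeneratesFullLattice Γ

/-- The canonical embedding `ℕ^{1+d} → ℝ^{1+d}`. -/
def nptToReal {d : ℕ} (p : NPt d) : ℝ × (Fin d → ℝ) :=
  ((p.1 : ℝ), fun i => (p.2 i : ℝ))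

/-- The convex cone generated by a subset `S` of a real vector space: the set of finite
nonnegative linear combinations of elements of `S`. -/
def coneGen {E : Type*} [AddCommMonoid E] [Module ℝ E] (S : Set E) : Set E :=
  {y | ∃ (n : ℕ) (c : Fin n → ℝ) (p : Fin n → E),
    (∀ i, 0 ≤ c i) ∧ (∀ i, p i ∈ S) ∧ y = ∑ i, c i • p i}

/-- The Okounkov body of a subset `Σ ⊆ ℕ^{1+d}`: the slice at height `1` of the closed convex
cone generated by `Σ` in `ℝ^{1+d}`. -/
def okounkovBody {d : ℕ} (S : Set (NPt d)) : Set (Fin d → ℝ) :=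
  {x | ((1 : ℝ), x) ∈ closure (coneGen (nptToReal '' S))}

/-- The graded piece `Γ_m` of `Γ ⊆ ℕ^{1+d}`. -/
def gradedPiece {d : ℕ} (Γ : Set (NPt d)) (m : ℕ) : Set (Fin d → ℕ) :=
  {α | (m, α) ∈ Γ}

/-- The superlevel semigroup `Γ^{Φ,≥t}` of a function `Φ` on `Γ`. -/
def superlevel {d : ℕ} (Γ : Set (NPt d)) (Φ : NPt d → ℝ) (t : ℝ) : Set (NPt d) :=
  {p ∈ Γ | p.1 * t ≤ Φ p}

/-- `θ = limsup_{n → ∞} sup_{α ∈ Γ_n} Φ(n,α)/n`. -/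
noncomputable def thetaSup {d : ℕ} (Γ : Set (NPt d)) (Φ : NPt d → ℝ) : ℝ :=
  Filter.limsup (fun n : ℕ => sSup {r | ∃ α, (n, α) ∈ Γ ∧ r = Φ (n, α) / n}) Filter.atTop


namespace KhovAux

abbrev EE (d : ℕ) := ℝ × (Fin d → ℝ)
abbrev VV (d : ℕ) := ℤ × (Fin d → ℤ)

variable {d : ℕ}

section Cone

variable {X : Type*} [AddCommMonoid X] [Module ℝ X] {S T : Set X}

theorem coneGen_mono (h : S ⊆ T) : coneGen S ⊆ coneGen T := by
  rintro y ⟨n, c, p, h1, h2, rfl⟩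
  exact ⟨n, c, p, h1, fun i => h (h2 i), rfl⟩

theorem zero_mem_coneGen : (0 : X) ∈ coneGen S :=
  ⟨0, fun i => i.elim0, fun i => i.elim0, fun i => i.elim0, fun i => i.elim0, by simp⟩

theorem mem_coneGen_of_mem {x : X} (h : x ∈ S) : x ∈ coneGen S :=
  ⟨1, fun _ => 1, fun _ => x, fun _ => zero_le_one, fun _ => h, by simp⟩

theorem add_mem_coneGen {x y : X} (hx : x ∈ coneGen S) (hy : y ∈ coneGen S) :
    x + y ∈ coneGen S := by
  obtain ⟨n, c, p, hc, hp, rfl⟩ := hx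
  obtain ⟨m, e, q, he, hq, rfl⟩ := hy
  refine ⟨n + m, Fin.append c e, Fin.append p q, ?_, ?_, ?_⟩
  · intro i
    induction i using Fin.addCases with
    | left i => simpa using hc i
    | right i => simpa using he i
  · intro i
    induction i using Fin.addCases with
    | left i => simpa using hp i
    | right i => simpa using hq i
  · rw [Fin.sum_univ_add]
    simp [Fin.append_left, Fin.append_right]

theorem smul_mem_coneGen {t : ℝ} (ht : 0 ≤ t) {x : X} (hx : x ∈ coneGen S) :
    t • x ∈ coneGen S := by
  obtain ⟨n, c, p, hc, hp, rfl⟩ := hx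
  refine ⟨n, fun i => t * c i, p, fun i => mul_nonneg ht (hc i), hp, ?_⟩
  rw [Finset.smul_sum]
  simp [mul_smul]

theorem convex_coneGen : Convex ℝ (coneGen S) := by
  intro x hx y hy a b ha hb _
  exact add_mem_coneGen (smul_mem_coneGen ha hx) (smul_mem_coneGen hb hy)

end Cone

theorem coneGen_exists_finset {Γ : Set (NPt d)} {y : EE d}
    (hy : y ∈ coneGen (nptToReal '' Γ)) :
    ∃ F : Finset (NPt d), ↑F ⊆ Γ ∧ y ∈ coneGen (nptToReal '' (↑F : Set (NPt d))) := by
  classical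
  obtain ⟨n, c, p, hc, hp, rfl⟩ := hy
  choose γ hγΓ hγ using hp
  refine ⟨Finset.image γ Finset.univ, ?_, n, c, p, hc, fun i => ?_, rfl⟩
  · intro g hg
    simp only [Finset.coe_image, Set.mem_image] at hg
    obtain ⟨i, _, rfl⟩ := hg
    exact hγΓ i
  · exact ⟨γ i, by simp, hγ i⟩

theorem coneGen_finset_form {F : Finset (NPt d)} {y : EE d}
    (hy : y ∈ coneGen (nptToReal '' (↑F : Set (NPt d)))) :
    ∃ c : NPt d → ℝ, (∀ g, 0 ≤ c g) ∧ y = ∑ g ∈ F, c g • nptToReal g := by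
  classical
  obtain ⟨n, c, p, hc, hp, rfl⟩ := hy
  choose γ hγF hγ using hp
  refine ⟨fun g => ∑ i ∈ Finset.univ.filter (fun i => γ i = g), c i,
    fun g => Finset.sum_nonneg fun i _ => hc i, ?_⟩
  rw [← Finset.sum_fiberwise_of_maps_to (fun i _ => hγF i) (fun i => c i • p i)]
  refine Finset.sum_congr rfl fun g _ => ?_
  rw [Finset.sum_smul]
  refine Finset.sum_congr rfl fun i hi => ?_
  have h2 : γ i = g := (Finset.mem_filter.1 hi).2
  rw [← hγ i, h2]

-- === integer side ===

def nptToIntHom (d : ℕ) : NPt d →+ VV d where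
  toFun := nptToInt
  map_zero' := by
    refine Prod.ext ?_ (funext fun i => ?_) <;> simp [nptToInt]
  map_add' p q := by
    refine Prod.ext ?_ (funext fun i => ?_) <;> simp [nptToInt] <;> push_cast <;> rfl

theorem nptToIntHom_apply (p : NPt d) : nptToIntHom d p = nptToInt p := rfl

def Gz (Γ : Set (NPt d)) : Set (VV d) := nptToInt '' Γ

def Gz0 (Γ : Set (NPt d)) : Set (VV d) := Gz Γ ∪ {0}

variable {Γ : Set (NPt d)}

theorem zero_mem_Gz0 : (0 : VV d) ∈ Gz0 Γ := Or.inr rfl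

theorem Gz_add (hsg : IsGradedSubsemigroup Γ) {a b : VV d}
    (ha : a ∈ Gz Γ) (hb : b ∈ Gz Γ) : a + b ∈ Gz Γ := by
  obtain ⟨p, hp, rfl⟩ := ha
  obtain ⟨q, hq, rfl⟩ := hb
  exact ⟨p + q, hsg p hp q hq, (nptToIntHom d).map_add p q⟩

theorem Gz_add_Gz0 (hsg : IsGradedSubsemigroup Γ) {a b : VV d}
    (ha : a ∈ Gz Γ) (hb : b ∈ Gz0 Γ) : a + b ∈ Gz Γ := by
  rcases hb with hb | hb
  · exact Gz_add hsg ha hb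
  · simp only [Set.mem_singleton_iff] at hb; simpa [hb] using ha

theorem Gz0_add_Gz (hsg : IsGradedSubsemigroup Γ) {a b : VV d}
    (ha : a ∈ Gz0 Γ) (hb : b ∈ Gz Γ) : a + b ∈ Gz Γ := by
  rw [add_comm]; exact Gz_add_Gz0 hsg hb ha

theorem Gz0_add (hsg : IsGradedSubsemigroup Γ) {a b : VV d}
    (ha : a ∈ Gz0 Γ) (hb : b ∈ Gz0 Γ) : a + b ∈ Gz0 Γ := by
  rcases ha with ha | ha
  · exact Or.inl (Gz_add_Gz0 hsg ha hb)
  · simp only [Set.mem_singleton_iff] at ha; simpa [ha] using hb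

theorem Gz0_nsmul (hsg : IsGradedSubsemigroup Γ) {a : VV d} (ha : a ∈ Gz0 Γ) (k : ℕ) :
    k • a ∈ Gz0 Γ := by
  induction k with
  | zero => simpa using zero_mem_Gz0
  | succ n ih => rw [succ_nsmul]; exact Gz0_add hsg ih ha

theorem Gz_nsmul (hsg : IsGradedSubsemigroup Γ) {a : VV d} (ha : a ∈ Gz Γ) {k : ℕ}
    (hk : k ≠ 0) : k • a ∈ Gz Γ := by
  obtain ⟨n, rfl⟩ := Nat.exists_eq_succ_of_ne_zero hk
  rw [succ_nsmul]
  exact Gz0_add_Gz hsg (Gz0_nsmul hsg (Or.inl ha) n) ha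

theorem Gz0_zsmul (hsg : IsGradedSubsemigroup Γ) {a : VV d} (ha : a ∈ Gz0 Γ) {k : ℤ}
    (hk : 0 ≤ k) : k • a ∈ Gz0 Γ := by
  lift k to ℕ using hk
  rw [natCast_zsmul]
  exact Gz0_nsmul hsg ha k

theorem Gz_zsmul (hsg : IsGradedSubsemigroup Γ) {a : VV d} (ha : a ∈ Gz Γ) {k : ℤ}
    (hk : 0 < k) : k • a ∈ Gz Γ := by
  lift k to ℕ using le_of_lt hk
  rw [natCast_zsmul]
  exact Gz_nsmul hsg ha (by exact_mod_cast hk.ne')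

theorem Gz0_sum (hsg : IsGradedSubsemigroup Γ) {ι : Type*} (s : Finset ι) (f : ι → VV d)
    (hf : ∀ i ∈ s, f i ∈ Gz0 Γ) : ∑ i ∈ s, f i ∈ Gz0 Γ :=
  Finset.sum_induction f (· ∈ Gz0 Γ) (fun _ _ => Gz0_add hsg) zero_mem_Gz0 hf

theorem decomp (hsg : IsGradedSubsemigroup Γ) (hgen : GeneratesFullLattice Γ) (z : VV d) :
    ∃ a ∈ Gz0 Γ, ∃ b ∈ Gz0 Γ, z = a - b := by
  have hz : z ∈ AddSubgroup.closure (nptToInt '' Γ) := by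
    rw [hgen]; trivial
  refine AddSubgroup.closure_induction ?_ ?_ ?_ ?_ hz
  · intro x hx
    exact ⟨x, Or.inl hx, 0, zero_mem_Gz0, by simp⟩
  · exact ⟨0, zero_mem_Gz0, 0, zero_mem_Gz0, by simp⟩
  · rintro x y _ _ ⟨a, ha, b, hb, rfl⟩ ⟨a', ha', b', hb', rfl⟩
    exact ⟨a + a', Gz0_add hsg ha ha', b + b', Gz0_add hsg hb hb', by abel⟩
  · rintro x _ ⟨a, ha, b, hb, rfl⟩
    exact ⟨b, hb, a, ha, by abel⟩



variable {d : ℕ} {Γ : Set (NPt d)}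

/-- basis vectors of `VV d` -/
def bvec : Option (Fin d) → VV d
  | none => ((1 : ℤ), 0)
  | some i => ((0 : ℤ), Pi.single i 1)

theorem z_eq_sum (z : VV d) :
    z = z.1 • bvec none + ∑ i, z.2 i • bvec (some i) := by
  classical
  refine Prod.ext ?_ (funext fun j => ?_)
  · simp [bvec, Prod.fst_sum]
  · simp [bvec, Prod.snd_sum, Finset.sum_apply, Pi.single_apply]

theorem combo_eq (k n : ℤ) (a b : VV d) :
    (k + n) • a + (k - n) • b = n • (a - b) + k • (a + b) := by
  rw [add_smul, sub_smul, smul_sub, smul_add]; abel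

theorem exists_absorbing (hsg : IsGradedSubsemigroup Γ) (hgen : GeneratesFullLattice Γ) :
    ∃ b ∈ Gz Γ, ∀ z : VV d, ∀ k : ℕ, |z.1| + ∑ i, |z.2 i| < (k : ℤ) →
      z + (k : ℤ) • b ∈ Gz Γ := by
  classical
  choose A hA B hB hAB using fun j => decomp hsg hgen (bvec (d := d) j)
  -- not both A none, B none are zero
  have hnb : ¬(A none = 0 ∧ B none = 0) := by
    rintro ⟨h1, h2⟩
    have := hAB none
    rw [h1, h2] at this
    simp [bvec, Prod.ext_iff] at this
  have hAB' : ∀ j, A j - B j = bvec j := fun j => (hAB j).symm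
  refine ⟨(A none + B none) + ∑ i, (A (some i) + B (some i)), ?_, ?_⟩
  · have h0 : A none + B none ∈ Gz Γ := by
      rcases hA none with h | h
      · exact Gz_add_Gz0 hsg h (hB none)
      · simp only [Set.mem_singleton_iff] at h
        rcases hB none with h2 | h2
        · simpa [h] using h2
        · simp only [Set.mem_singleton_iff] at h2
          exact absurd ⟨h, h2⟩ hnb
    exact Gz_add_Gz0 hsg h0
      (Gz0_sum hsg _ _ fun i _ => Gz0_add hsg (hA (some i)) (hB (some i)))
  · intro z k hk
    have hz1 : |z.1| < (k : ℤ) := by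
      have : (0:ℤ) ≤ ∑ i, |z.2 i| := Finset.sum_nonneg fun i _ => abs_nonneg _
      omega
    have hz2 : ∀ i, |z.2 i| < (k : ℤ) := by
      intro i
      have h1 : |z.2 i| ≤ ∑ j, |z.2 j| :=
        Finset.single_le_sum (f := fun j => |z.2 j|) (fun j _ => abs_nonneg _) (Finset.mem_univ i)
      have : (0:ℤ) ≤ |z.1| := abs_nonneg _
      omega
    have key : z + (k : ℤ) • ((A none + B none) + ∑ i, (A (some i) + B (some i)))
        = ((k + z.1) • A none + (k - z.1) • B none)
          + ∑ i, ((k + z.2 i) • A (some i) + (k - z.2 i) • B (some i)) := by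
      conv_lhs => rw [z_eq_sum z]
      simp only [combo_eq, hAB']
      simp only [smul_add, Finset.smul_sum, Finset.sum_add_distrib]
      abel
    rw [key]
    have hterm : ∀ i : Fin d,
        (k + z.2 i) • A (some i) + (k - z.2 i) • B (some i) ∈ Gz0 Γ := by
      intro i
      refine Gz0_add hsg (Gz0_zsmul hsg (hA (some i)) ?_) (Gz0_zsmul hsg (hB (some i)) ?_)
      · have := (abs_lt.1 (hz2 i)).1; omega
      · have := (abs_lt.1 (hz2 i)).2; omega
    have h0 : (k + z.1) • A none + (k - z.1) • B none ∈ Gz Γ := by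
      have hp1 : (0:ℤ) < k + z.1 := by have := (abs_lt.1 hz1).1; omega
      have hp2 : (0:ℤ) < k - z.1 := by have := (abs_lt.1 hz1).2; omega
      rcases hA none with h | h
      · exact Gz_add_Gz0 hsg (Gz_zsmul hsg h hp1) (Gz0_zsmul hsg (hB none) hp2.le)
      · simp only [Set.mem_singleton_iff] at h
        rcases hB none with h2 | h2
        · rw [h]; simpa using Gz_zsmul hsg h2 hp2
        · simp only [Set.mem_singleton_iff] at h2
          exact absurd ⟨h, h2⟩ hnb
    exact Gz_add_Gz0 hsg h0 (Gz0_sum hsg _ _ fun i _ => hterm i)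




open Metric

variable {d : ℕ} {Γ : Set (NPt d)}

/-- the ℓ¹ "norm" on `EE d`. -/
def l1 (p : EE d) : ℝ := |p.1| + ∑ i, |p.2 i|

theorem l1_nonneg (p : EE d) : 0 ≤ l1 p :=
  add_nonneg (abs_nonneg _) (Finset.sum_nonneg fun i _ => abs_nonneg _)

theorem l1_add (p q : EE d) : l1 (p + q) ≤ l1 p + l1 q := by
  unfold l1
  have h1 : |(p + q).1| ≤ |p.1| + |q.1| := abs_add_le _ _
  have h2 : ∑ i, |(p + q).2 i| ≤ ∑ i, |p.2 i| + ∑ i, |q.2 i| := by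
    rw [← Finset.sum_add_distrib]
    exact Finset.sum_le_sum fun i _ => abs_add_le _ _
  calc |(p + q).1| + ∑ i, |(p + q).2 i| ≤ (|p.1| + |q.1|) + (∑ i, |p.2 i| + ∑ i, |q.2 i|) :=
        add_le_add h1 h2
    _ = _ := by ring

theorem l1_smul (c : ℝ) (p : EE d) : l1 (c • p) = |c| * l1 p := by
  unfold l1
  simp only [Prod.smul_fst, Prod.smul_snd, smul_eq_mul, Pi.smul_apply, abs_mul,
    Finset.mul_sum, mul_add]

theorem l1_sum_le {ι : Type*} (F : Finset ι) (t : ι → ℝ) (v : ι → EE d)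
    (ht : ∀ g ∈ F, |t g| ≤ 1) :
    l1 (∑ g ∈ F, t g • v g) ≤ ∑ g ∈ F, l1 (v g) := by
  classical
  induction F using Finset.induction with
  | empty => simp [l1]
  | @insert a s ha ih =>
    rw [Finset.sum_insert ha, Finset.sum_insert ha]
    calc l1 (t a • v a + ∑ g ∈ s, t g • v g)
        ≤ l1 (t a • v a) + l1 (∑ g ∈ s, t g • v g) := l1_add _ _
      _ ≤ 1 * l1 (v a) + ∑ g ∈ s, l1 (v g) := by
          refine add_le_add ?_ (ih fun g hg => ht g (Finset.mem_insert_of_mem hg))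
          rw [l1_smul]
          exact mul_le_mul_of_nonneg_right (ht a (Finset.mem_insert_self a s)) (l1_nonneg _)
      _ = _ := by rw [one_mul]

theorem l1_le_dist (y z : EE d) : l1 (y - z) ≤ (d + 1) * dist y z := by
  unfold l1
  have h1 : |(y - z).1| ≤ dist y z := by
    rw [Prod.dist_eq]
    refine le_trans ?_ (le_max_left _ _)
    rw [Real.dist_eq]; rfl
  have h2 : ∀ i, |(y - z).2 i| ≤ dist y z := by
    intro i
    rw [Prod.dist_eq]
    refine le_trans ?_ (le_max_right _ _)
    refine le_trans ?_ (dist_le_pi_dist y.2 z.2 i)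
    rw [Real.dist_eq]; rfl
  calc |(y - z).1| + ∑ i, |(y - z).2 i| ≤ dist y z + ∑ _i : Fin d, dist y z :=
        add_le_add h1 (Finset.sum_le_sum fun i _ => h2 i)
    _ = (d + 1) * dist y z := by
        rw [Finset.sum_const, Finset.card_univ, Fintype.card_fin, nsmul_eq_mul]; ring

/-- real basis vectors -/
def rvec : Option (Fin d) → EE d
  | none => ((1 : ℝ), 0)
  | some i => ((0 : ℝ), Pi.single i 1)

theorem norm_rvec (j : Option (Fin d)) : ‖rvec j‖ = 1 := by
  classical
  cases j with
  | none => simp [rvec, Prod.norm_def]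
  | some i =>
    simp [rvec, Prod.norm_def, Pi.norm_single]

theorem abs_mul_sgn (a : ℝ) : |a| * (if 0 ≤ a then (1:ℝ) else -1) = a := by
  rcases le_or_gt 0 a with h | h
  · rw [if_pos h, abs_of_nonneg h, mul_one]
  · rw [if_neg (not_le.2 h), abs_of_neg h]; ring

theorem crossPolytope_subset {C : Set (EE d)} (hC : Convex ℝ C) {z : EE d} {ρ : ℝ}
    (hρ : 0 < ρ) (h0 : z ∈ C)
    (hpts : ∀ (j : Option (Fin d)) (σ : ℝ), σ = 1 ∨ σ = -1 → z + (ρ * σ) • rvec j ∈ C)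
    {y : EE d} (hy : l1 (y - z) ≤ ρ) : y ∈ C := by
  classical
  set v : EE d := y - z with hv
  set vc : Option (Fin d) → ℝ := fun j => Option.elim j v.1 (fun i => v.2 i) with hvc
  set t : Option (Fin d) → ℝ := fun j => |vc j| / ρ with ht
  set σf : Option (Fin d) → ℝ := fun j => if 0 ≤ vc j then (1:ℝ) else -1 with hσf
  have hσ : ∀ j, σf j = 1 ∨ σf j = -1 := by
    intro j; by_cases h : 0 ≤ vc j <;> simp [hσf, h]
  have htnn : ∀ j, 0 ≤ t j := fun j => div_nonneg (abs_nonneg _) hρ.le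
  set T : ℝ := ∑ j : Option (Fin d), t j with hT
  have hTval : T = (|v.1| + ∑ i, |v.2 i|) / ρ := by
    rw [hT, Fintype.sum_option]
    simp [ht, hvc, Finset.sum_div, add_div]
  have hT1 : T ≤ 1 := by
    rw [hTval, div_le_one hρ]
    exact hy
  have hcoef : ∀ j, t j * (ρ * σf j) = vc j := by
    intro j
    have h1 : t j * ρ = |vc j| := div_mul_cancel₀ _ hρ.ne'
    calc t j * (ρ * σf j) = (t j * ρ) * σf j := by ring
      _ = vc j := by rw [h1, hσf]; exact abs_mul_sgn _
  have hsv : ∑ j : Option (Fin d), vc j • rvec j = v := by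
    rw [Fintype.sum_option]
    refine Prod.ext ?_ (funext fun kk => ?_)
    · simp [rvec, hvc, Prod.fst_sum]
    · simp [rvec, hvc, Prod.snd_sum, Finset.sum_apply, Pi.single_apply]
  set w : Option (Option (Fin d)) → ℝ := fun j? => Option.elim j? (1 - T) t with hw
  set q : Option (Option (Fin d)) → EE d :=
    fun j? => Option.elim j? z (fun j => z + (ρ * σf j) • rvec j) with hq
  have hwsum : ∑ j?, w j? = 1 := by
    rw [Fintype.sum_option]
    simp [hw, hT]
  have hwnn : ∀ j? ∈ Finset.univ, 0 ≤ w j? := by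
    rintro (_ | j) _
    · simpa [hw] using hT1
    · exact htnn j
  have hqmem : ∀ j? ∈ Finset.univ, q j? ∈ C := by
    rintro (_ | j) _
    · exact h0
    · exact hpts j (σf j) (hσ j)
  have hkey : ∑ j?, w j? • q j? = y := by
    rw [Fintype.sum_option]
    have hexp : ∀ j, w (some j) • q (some j) = t j • z + vc j • rvec j := by
      intro j
      show t j • (z + (ρ * σf j) • rvec j) = _
      rw [smul_add, smul_smul, hcoef]
    rw [Finset.sum_congr rfl fun j _ => hexp j, Finset.sum_add_distrib, ← Finset.sum_smul,
      ← hT, hsv]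
    show (1 - T) • z + (T • z + v) = y
    rw [hv]
    module
  rw [← hkey]
  exact hC.sum_mem hwnn hwsum hqmem




open Metric

variable {d : ℕ} {Γ : Set (NPt d)}

theorem smul_mem_closure_coneGen {S : Set (EE d)} {c : ℝ} (hc : 0 ≤ c) {z : EE d}
    (hz : z ∈ closure (coneGen S)) : c • z ∈ closure (coneGen S) := by
  have h1 : c • z ∈ (c • ·) '' closure (coneGen S) := ⟨z, hz, rfl⟩
  have h2 : (c • ·) '' closure (coneGen S) ⊆ closure ((c • ·) '' coneGen S) :=
    image_closure_subset_closure_image (continuous_const_smul c)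
  refine closure_mono ?_ (h2 h1)
  rintro _ ⟨u, hu, rfl⟩
  exact smul_mem_coneGen hc hu

theorem mem_interior_cone_of_mem_interior_body {x : Fin d → ℝ}
    (hx : x ∈ interior (okounkovBody Γ)) :
    ((1:ℝ), x) ∈ interior (closure (coneGen (nptToReal '' Γ))) := by
  rw [mem_interior_iff_mem_nhds, Metric.mem_nhds_iff] at hx ⊢
  obtain ⟨δ, hδ, hball⟩ := hx
  set r : ℝ := min (1/2) (δ / (2 * ‖x‖ + 3)) with hr
  have hrpos : 0 < r := by
    apply lt_min (by norm_num)
    apply div_pos hδ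
    positivity
  refine ⟨r, hrpos, ?_⟩
  rintro ⟨s, y⟩ hsy
  rw [mem_ball, Prod.dist_eq, max_lt_iff] at hsy
  obtain ⟨hs1', hy1'⟩ := hsy
  have hs1 : |s - 1| < r := by rw [Real.dist_eq] at hs1'; exact hs1'
  have hy1 : dist y x < r := hy1'
  have hrhalf : r ≤ 1/2 := min_le_left _ _
  have hs2 : 1/2 ≤ s := by
    have := abs_lt.1 hs1
    linarith [this.1]
  have hspos : 0 < s := by linarith
  have hy2 : s⁻¹ • y ∈ Metric.ball x δ := by
    rw [mem_ball]
    have h1 : dist (s⁻¹ • y) x ≤ dist (s⁻¹ • y) y + dist y x := dist_triangle _ _ _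
    have h2 : dist (s⁻¹ • y) y = |s⁻¹ - 1| * ‖y‖ := by
      rw [dist_eq_norm]
      have : s⁻¹ • y - y = (s⁻¹ - 1) • y := by rw [sub_smul, one_smul]
      rw [this, norm_smul, Real.norm_eq_abs]
    have h3 : |s⁻¹ - 1| ≤ 2 * r := by
      have : s⁻¹ - 1 = (1 - s) / s := by field_simp
      rw [this, abs_div, abs_of_pos hspos]
      rw [div_le_iff₀ hspos]
      have h4 : |1 - s| = |s - 1| := abs_sub_comm _ _
      have h5 : |1 - s| ≤ r := by rw [h4]; exact hs1.le
      nlinarith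
    have h5 : ‖y‖ ≤ ‖x‖ + 1 := by
      have h51 := norm_sub_norm_le y x
      have h52 : ‖y - x‖ = dist y x := (dist_eq_norm y x).symm
      rw [h52] at h51
      have h53 : dist y x < 1/2 := lt_of_lt_of_le hy1 hrhalf
      linarith
    have h6 : dist y x < r := hy1
    have h7 : r * (2 * ‖x‖ + 3) ≤ δ := by
      have : r ≤ δ / (2 * ‖x‖ + 3) := min_le_right _ _
      rw [le_div_iff₀ (by positivity)] at this
      linarith
    calc dist (s⁻¹ • y) x ≤ |s⁻¹ - 1| * ‖y‖ + dist y x := by rw [← h2]; exact h1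
      _ ≤ 2 * r * (‖x‖ + 1) + dist y x := by
          have hn : 0 ≤ ‖y‖ := norm_nonneg y
          have := mul_le_mul h3 h5 hn (by positivity)
          linarith
      _ < 2 * r * (‖x‖ + 1) + r := by linarith
      _ = r * (2 * ‖x‖ + 3) := by ring
      _ ≤ δ := h7
  have hmem : ((1:ℝ), s⁻¹ • y) ∈ closure (coneGen (nptToReal '' Γ)) := hball hy2
  have heq : (s, y) = s • ((1:ℝ), s⁻¹ • y) := by
    refine Prod.ext ?_ ?_
    · simp
    · simp [smul_smul, mul_inv_cancel₀ hspos.ne']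
  rw [heq]
  exact smul_mem_closure_coneGen hspos.le hmem

theorem interior_closure_subset {C : Set (EE d)} (hC : Convex ℝ C)
    (hne : (interior (closure C)).Nonempty) :
    interior (closure C) ⊆ interior C := by
  have h1 : affineSpan ℝ (closure C) = ⊤ :=
    (hC.closure.interior_nonempty_iff_affineSpan_eq_top).1 hne
  have h2 : affineSpan ℝ C = ⊤ := by
    refine top_unique ?_
    rw [← h1]
    refine affineSpan_le.2 ?_
    have h3 : closure C ⊆ closure (affineSpan ℝ C : Set (EE d)) :=
      closure_mono (subset_affineSpan ℝ C)
    rwa [IsClosed.closure_eq ((affineSpan ℝ C).closed_of_finiteDimensional)] at h3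
  obtain ⟨w, hw⟩ := (hC.interior_nonempty_iff_affineSpan_eq_top).2 h2
  intro z hz
  rw [mem_interior_iff_mem_nhds, Metric.mem_nhds_iff] at hz
  obtain ⟨r, hr, hball⟩ := hz
  set ε : ℝ := r / (2 * (‖z - w‖ + 1)) with hε
  have hεpos : 0 < ε := by positivity
  have hz' : z + ε • (z - w) ∈ closure C := by
    apply hball
    rw [mem_ball, dist_eq_norm]
    have : z + ε • (z - w) - z = ε • (z - w) := by abel
    rw [this, norm_smul, Real.norm_eq_abs, abs_of_pos hεpos]
    have hlt : ε * (‖z - w‖ + 1) = r / 2 := by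
      rw [hε]; field_simp
    calc ε * ‖z - w‖ < ε * (‖z - w‖ + 1) := by nlinarith
      _ = r / 2 := hlt
      _ < r := by linarith
  have hcombo := hC.combo_interior_closure_mem_interior hw hz'
    (a := ε / (1 + ε)) (b := 1 / (1 + ε)) (by positivity) (by positivity)
    (by field_simp; ring)
  have : (ε / (1 + ε)) • w + (1 / (1 + ε)) • (z + ε • (z - w)) = z := by
    have h1ε : (1 : ℝ) + ε ≠ 0 := by positivity
    match_scalars <;> (field_simp; try ring)
  rwa [this] at hcombo


open Metric in
theorem exists_finset_ball_subset {Γ : Set (NPt d)} {z : EE d}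
    (hz : z ∈ interior (coneGen (nptToReal '' Γ))) :
    ∃ (F : Finset (NPt d)) (ρ : ℝ), ↑F ⊆ Γ ∧ 0 < ρ ∧
      Metric.ball z ρ ⊆ coneGen (nptToReal '' (↑F : Set (NPt d))) := by
  classical
  rw [mem_interior_iff_mem_nhds, Metric.mem_nhds_iff] at hz
  obtain ⟨r, hr, hball⟩ := hz
  -- the test points
  set pts : Option (Option (Fin d) × Bool) → EE d := fun a =>
    Option.elim a z (fun jb => z + (r/2 * (if jb.2 then (1:ℝ) else -1)) • rvec jb.1) with hpts
  have hmem : ∀ a, pts a ∈ coneGen (nptToReal '' Γ) := by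
    rintro (_ | ⟨j, b⟩)
    · exact hball (mem_ball_self hr)
    · apply hball
      rw [mem_ball]
      have : pts (some (j, b)) - z = (r/2 * (if b then (1:ℝ) else -1)) • rvec j := by
        simp [hpts]
      rw [dist_eq_norm, this, norm_smul, norm_rvec, mul_one, Real.norm_eq_abs]
      have hr2 : (0:ℝ) ≤ r/2 := by linarith
      have habs : |r/2 * (if b then (1:ℝ) else -1)| = r/2 := by
        cases b
        · rw [show (if false = true then (1:ℝ) else -1) = -1 from rfl, mul_neg_one, abs_neg,
            abs_of_nonneg hr2]
        · rw [show (if true = true then (1:ℝ) else -1) = 1 from rfl, mul_one,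
            abs_of_nonneg hr2]
      rw [habs]; linarith
  choose Fs hFs hFmem using fun a => coneGen_exists_finset (hmem a)
  set F : Finset (NPt d) := Finset.univ.biUnion Fs with hF
  have hFsub : ∀ a, (↑(Fs a) : Set (NPt d)) ⊆ ↑F := by
    intro a g hg
    simp only [hF, Finset.coe_biUnion, Finset.coe_univ, Set.mem_iUnion]
    exact ⟨a, trivial, hg⟩
  have hmemF : ∀ a, pts a ∈ coneGen (nptToReal '' (↑F : Set (NPt d))) := fun a =>
    coneGen_mono (Set.image_mono (hFsub a)) (hFmem a)
  refine ⟨F, r / (2 * (d + 1)), ?_, by positivity, ?_⟩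
  · intro g hg
    simp only [hF, Finset.coe_biUnion, Finset.coe_univ, Set.mem_iUnion] at hg
    obtain ⟨a, _, hga⟩ := hg
    exact hFs a hga
  · intro y hy
    refine crossPolytope_subset convex_coneGen (by linarith : (0:ℝ) < r/2)
      (show z ∈ coneGen (nptToReal '' (↑F : Set (NPt d))) from hmemF none) ?_ ?_
    · intro j σ hσ
      rcases hσ with rfl | rfl
      · have := hmemF (some (j, true))
        simpa [hpts] using this
      · have := hmemF (some (j, false))
        simpa [hpts] using this
    · rw [mem_ball] at hy
      have h1 : l1 (y - z) ≤ (d + 1) * dist y z := l1_le_dist y z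
      have h2 : ((d:ℝ) + 1) * dist y z ≤ ((d:ℝ) + 1) * (r / (2 * ((d:ℝ) + 1))) :=
        mul_le_mul_of_nonneg_left hy.le (by positivity)
      have h3 : ((d:ℝ) + 1) * (r / (2 * ((d:ℝ) + 1))) = r / 2 := by
        field_simp
      linarith

open Metric in
theorem exists_finset_thickening {Γ : Set (NPt d)} {K : Set (Fin d → ℝ)}
    (hKc : IsCompact K) (hKne : K.Nonempty) (hKsub : K ⊆ interior (okounkovBody Γ)) :
    ∃ (F : Finset (NPt d)) (δ : ℝ), ↑F ⊆ Γ ∧ 0 < δ ∧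
      Metric.thickening δ ((fun x => ((1:ℝ), x)) '' K) ⊆
        coneGen (nptToReal '' (↑F : Set (NPt d))) := by
  classical
  set K' : Set (EE d) := (fun x => ((1:ℝ), x)) '' K with hK'
  have hK'c : IsCompact K' := hKc.image (continuous_const.prodMk continuous_id)
  have hK'ne : K'.Nonempty := hKne.image _
  -- every point of K' is interior to the cone
  have hint : ∀ z ∈ K', z ∈ interior (coneGen (nptToReal '' Γ)) := by
    rintro _ ⟨x, hx, rfl⟩
    have h1 := mem_interior_cone_of_mem_interior_body (hKsub hx)
    exact interior_closure_subset convex_coneGen ⟨_, h1⟩ h1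
  choose! Fz ρz hprop using fun z (hz : z ∈ K') => exists_finset_ball_subset (hint z hz)
  have hcover : K' ⊆ ⋃ z ∈ K', Metric.ball z (ρz z) := by
    intro z hz
    exact Set.mem_biUnion hz (mem_ball_self (hprop z hz).2.1)
  obtain ⟨b', hb'sub, hb'fin, hb'cover⟩ :=
    hK'c.elim_finite_subcover_image (fun z _ => isOpen_ball) hcover
  set t : Finset (EE d) := hb'fin.toFinset with hts
  have htmem : ∀ z ∈ t, z ∈ K' := fun z hz => hb'sub (hb'fin.mem_toFinset.1 hz)
  set F : Finset (NPt d) := t.biUnion Fz with hF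
  have hFΓ : (↑F : Set (NPt d)) ⊆ Γ := by
    intro g hg
    simp only [hF, Finset.coe_biUnion, Set.mem_iUnion] at hg
    obtain ⟨z, hz, hgz⟩ := hg
    exact (hprop z (htmem z (by exact_mod_cast hz))).1 hgz
  set W : Set (EE d) := ⋃ z ∈ t, Metric.ball z (ρz z) with hW
  have hWopen : IsOpen W := isOpen_biUnion fun z _ => isOpen_ball
  have hK'W : K' ⊆ W := by
    intro p hp
    have h := hb'cover hp
    simp only [Set.mem_iUnion] at h
    obtain ⟨z, hz, hpz⟩ := h
    rw [hW]
    simp only [Set.mem_iUnion]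
    exact ⟨z, hb'fin.mem_toFinset.2 hz, hpz⟩
  have hWsub : W ⊆ coneGen (nptToReal '' (↑F : Set (NPt d))) := by
    intro p hp
    simp only [hW, Set.mem_iUnion] at hp
    obtain ⟨z, hz, hpz⟩ := hp
    have hball := (hprop z (htmem z hz)).2.2 hpz
    refine coneGen_mono (Set.image_mono ?_) hball
    intro g hg
    simp only [hF, Finset.coe_biUnion, Set.mem_iUnion]
    exact ⟨z, by exact_mod_cast hz, hg⟩
  obtain ⟨δ, hδ, hthick⟩ := hK'c.exists_thickening_subset_open hWopen hK'W
  exact ⟨F, δ, hFΓ, hδ, hthick.trans hWsub⟩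
def intToRealHom (d : ℕ) : VV d →+ EE d where
  toFun z := ((z.1 : ℝ), fun i => (z.2 i : ℝ))
  map_zero' := by
    refine Prod.ext ?_ (funext fun i => ?_) <;> simp
  map_add' p q := by
    refine Prod.ext ?_ (funext fun i => ?_) <;> push_cast <;> simp [Prod.fst_add, Prod.snd_add]

theorem intToRealHom_fst (z : VV d) : (intToRealHom d z).1 = (z.1 : ℝ) := rfl
theorem intToRealHom_snd (z : VV d) (i : Fin d) : (intToRealHom d z).2 i = (z.2 i : ℝ) := rfl

theorem intToRealHom_nptToInt (p : NPt d) : intToRealHom d (nptToInt p) = nptToReal p := by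
  refine Prod.ext ?_ (funext fun i => ?_) <;> simp [intToRealHom, nptToInt, nptToReal]

theorem intToRealHom_nptToIntHom (p : NPt d) :
    intToRealHom d (nptToIntHom d p) = nptToReal p := intToRealHom_nptToInt p

end KhovAux

section FinalProof
open KhovAux

/-- For a compact convex subset `K` of the interior of the Okounkov body of an admissible
graded subsemigroup `Γ`, for all large `m` the rescaled graded piece `Γ_m / m` meets `K`
exactly in the rational lattice points `ℤ^d / m` lying in `K`. -/

theorem compact_inter_rescaled_gradedPiece
    (d : ℕ) (hd : 1 ≤ d) (Γ : Set (NPt d)) (hΓ : IsAdmissible Γ)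
    (K : Set (Fin d → ℝ)) (hKc : IsCompact K) (hKconv : Convex ℝ K)
    (hKsub : K ⊆ interior (okounkovBody Γ)) :
    ∃ M : ℕ, ∀ m : ℕ, M ≤ m →
      K ∩ {x | ∃ α : Fin d → ℕ, (m, α) ∈ Γ ∧ x = fun i => (α i : ℝ) / m}
        = K ∩ {x | ∃ β : Fin d → ℤ, x = fun i => (β i : ℝ) / m} := by
  classical
  rcases K.eq_empty_or_nonempty with rfl | hKne
  · exact ⟨1, fun m _ => by simp⟩
  obtain ⟨hsg, hgrowth, hgen⟩ := hΓ
  obtain ⟨F, δ, hFΓ, hδ, hthick⟩ := exists_finset_thickening hKc hKne hKsub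
  obtain ⟨b, hbGz, habs⟩ := exists_absorbing hsg hgen
  set bR : EE d := intToRealHom d b with hbR
  set R : ℝ := ∑ g ∈ F, l1 (nptToReal g) with hR
  set k : ℕ := ⌈R⌉₊ + 1 with hk
  set M : ℕ := max 1 (⌈((k : ℝ) * ‖bR‖) / δ⌉₊ + 1) with hM
  refine ⟨M, fun m hm => ?_⟩
  have hm1 : 1 ≤ m := le_trans (le_max_left _ _) hm
  have hmpos : (0:ℝ) < m := by exact_mod_cast hm1
  ext x
  simp only [Set.mem_inter_iff, Set.mem_setOf_eq]
  constructor
  · rintro ⟨hxK, α, hα, rfl⟩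
    exact ⟨hxK, fun i => (α i : ℤ), funext fun i => by push_cast; ring⟩
  · rintro ⟨hxK, β, hxβ⟩
    refine ⟨hxK, ?_⟩
    set z : VV d := ((m : ℤ), β) with hz
    set p : EE d := ((1:ℝ), x) - ((k : ℝ)/m) • bR with hp
    have hxi : ∀ i, (m : ℝ) * x i = (β i : ℝ) := by
      intro i
      rw [hxβ]
      field_simp
    -- p is in the thickening of K'
    have hpthick : p ∈ Metric.thickening δ ((fun x => ((1:ℝ), x)) '' K) := by
      rw [Metric.mem_thickening_iff]
      refine ⟨((1:ℝ), x), ⟨x, hxK, rfl⟩, ?_⟩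
      have h1 : dist p ((1:ℝ), x) = ((k : ℝ)/m) * ‖bR‖ := by
        rw [dist_eq_norm, hp]
        have : ((1:ℝ), x) - ((k : ℝ)/m) • bR - ((1:ℝ), x) = -(((k : ℝ)/m) • bR) := by abel
        rw [this, norm_neg, norm_smul, Real.norm_eq_abs, abs_of_nonneg (by positivity)]
      rw [h1]
      -- from hm : M ≤ m
      have h2 : ((k : ℝ) * ‖bR‖) / δ < m := by
        have h3 : (⌈((k : ℝ) * ‖bR‖) / δ⌉₊ + 1 : ℕ) ≤ m := le_trans (le_max_right _ _) hm
        have h4 : ((k : ℝ) * ‖bR‖) / δ ≤ ⌈((k : ℝ) * ‖bR‖) / δ⌉₊ := Nat.le_ceil _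
        have h5 : ((⌈((k : ℝ) * ‖bR‖) / δ⌉₊ : ℝ) + 1) ≤ m := by exact_mod_cast h3
        linarith
      rw [div_lt_iff₀ hδ] at h2
      rw [div_mul_eq_mul_div, div_lt_iff₀ hmpos]
      linarith
    have hpc := hthick hpthick
    have hq : (m : ℝ) • p ∈ coneGen (nptToReal '' (↑F : Set (NPt d))) :=
      smul_mem_coneGen hmpos.le hpc
    have hqeq : (m : ℝ) • p = intToRealHom d (z - (k : ℤ) • b) := by
      have hbR1 : bR.1 = (b.1 : ℝ) := rfl
      have hbR2 : ∀ i, bR.2 i = (b.2 i : ℝ) := fun _ => rfl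
      rw [map_sub, map_zsmul, ← Int.cast_smul_eq_zsmul ℝ, hp, hz]
      refine Prod.ext ?_ (funext fun i => ?_)
      · simp only [Prod.smul_fst, Prod.fst_sub, smul_eq_mul, intToRealHom_fst, hbR1]
        push_cast
        field_simp
      · simp only [Prod.smul_snd, Prod.snd_sub, Pi.sub_apply, Pi.smul_apply, smul_eq_mul,
          intToRealHom_snd, hbR2]
        push_cast
        rw [mul_sub, hxi i]
        field_simp
    rw [hqeq] at hq
    obtain ⟨c, hcnn, hceq⟩ := coneGen_finset_form hq
    set G : NPt d := ∑ g ∈ F, ⌊c g⌋₊ • g with hG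
    have hGmem : nptToInt G ∈ Gz0 Γ := by
      rw [hG, show (nptToInt (∑ g ∈ F, ⌊c g⌋₊ • g) : VV d)
          = ∑ g ∈ F, ⌊c g⌋₊ • nptToInt g by
        rw [show (nptToInt : NPt d → VV d) = nptToIntHom d from rfl]
        rw [map_sum]
        exact Finset.sum_congr rfl fun g _ => map_nsmul _ _ _]
      exact Gz0_sum hsg _ _ fun g hg =>
        Gz0_nsmul hsg (Or.inl ⟨g, hFΓ hg, rfl⟩) _
    set w : VV d := z - (k : ℤ) • b - nptToInt G with hw
    have hwR : intToRealHom d w = ∑ g ∈ F, (c g - (⌊c g⌋₊ : ℝ)) • nptToReal g := by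
      rw [hw, map_sub, hceq]
      have hGR : intToRealHom d (nptToInt G) = ∑ g ∈ F, (⌊c g⌋₊ : ℝ) • nptToReal g := by
        rw [hG, show (nptToInt : NPt d → VV d) = nptToIntHom d from rfl]
        rw [map_sum, map_sum]
        refine Finset.sum_congr rfl fun g _ => ?_
        rw [map_nsmul, map_nsmul, intToRealHom_nptToIntHom, ← Nat.cast_smul_eq_nsmul ℝ]
      rw [hGR, ← Finset.sum_sub_distrib]
      exact Finset.sum_congr rfl fun g _ => (sub_smul _ _ _).symm
    have hl1 : l1 (intToRealHom d w) ≤ R := by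
      rw [hwR, hR]
      refine l1_sum_le F _ _ fun g _ => ?_
      rw [abs_le]
      constructor
      · have := Nat.floor_le (hcnn g); linarith
      · have := Nat.lt_floor_add_one (c g); linarith
    have hwlt : |w.1| + ∑ i, |w.2 i| < (k : ℤ) := by
      have hcast : ((|w.1| + ∑ i, |w.2 i| : ℤ) : ℝ) = l1 (intToRealHom d w) := by
        unfold l1
        rw [intToRealHom_fst]
        have hsnd : ∀ i, (intToRealHom d w).2 i = ((w.2 i : ℤ) : ℝ) := fun i => rfl
        simp only [hsnd]
        push_cast
        try rfl
        try ring
      have h6 : R < (k : ℝ) := by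
        rw [hk]; push_cast
        have := Nat.le_ceil R; linarith
      have h7 : ((|w.1| + ∑ i, |w.2 i| : ℤ) : ℝ) < (k : ℝ) := by
        rw [hcast]; linarith
      exact_mod_cast h7
    have hzmem : z ∈ Gz Γ := by
      have hzeq : z = nptToInt G + (w + (k : ℤ) • b) := by rw [hw]; abel
      rw [hzeq]
      exact Gz0_add_Gz hsg hGmem (habs w k hwlt)
    obtain ⟨γ, hγΓ, hγ⟩ := hzmem
    have hγ1 : (γ.1 : ℤ) = (m : ℤ) := congrArg Prod.fst hγ
    have hγ1' : γ.1 = m := by exact_mod_cast hγ1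
    have hγ2 : ∀ i, (γ.2 i : ℤ) = β i := fun i => congrFun (congrArg Prod.snd hγ) i
    refine ⟨γ.2, ?_, ?_⟩
    · have : γ = (m, γ.2) := by rw [← hγ1']
      rwa [this] at hγΓ
    · rw [hxβ]
      funext i
      have : ((γ.2 i : ℕ) : ℝ) = ((β i : ℤ) : ℝ) := by
        rw [← hγ2 i]; push_cast; ring
      rw [this]

end FinalProof
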